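/- Let Γ be a locally finite simple graph, F a field and λ ∈ F. Then the set S_{F,λ}(Γ) is finite if and only if the subspace of F^{V(Γ)} consisting of all finitely supported functions f with A_{Γ,F} f = λ·f is finite-dimensional over F. -/
import Mathlib


open Function

/-- The adjacency operator of a locally finite simple graph over a field `F`:
`(adjOp G f) w = ∑_{u ∈ Γ(w)} f u`. -/
def adjOp {V F : Type*} (G : SimpleGraph V) [G.LocallyFinite] [Field F]
    (f : V → F) (w : V) : F :=
  ∑ u ∈ G.neighborFinset w, f u

/-- An eigenfunction of the adjacency operator corresponding to `l`:
a nonzero `f` with `A f = l • f`. -/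
def IsEigenfun {V F : Type*} (G : SimpleGraph V) [G.LocallyFinite] [Field F]
    (l : F) (f : V → F) : Prop :=
  f ≠ 0 ∧ ∀ w, adjOp G f w = l * f w

/-- An `(F, l)`-propagator of `G` with respect to the vertex `v`. -/
def IsPropagator {V F : Type*} [DecidableEq V] (G : SimpleGraph V) [G.LocallyFinite] [Field F]
    (l : F) (v : V) (f : V → F) : Prop :=
  ∀ w, adjOp G f w - l * f w = if w = v then 1 else 0

/-- The subspace of `F^{V(Γ)}` consisting of the finitely supported functions `f`
with `A f = l • f`. -/
def finSuppEigSpace {V F : Type*} (G : SimpleGraph V) [G.LocallyFinite] [Field F]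
    (l : F) : Submodule F (V → F) where
  carrier := {f | (support f).Finite ∧ ∀ w, adjOp G f w = l * f w}
  add_mem' := by
    rintro f g ⟨hf, hf'⟩ ⟨hg, hg'⟩
    refine ⟨(hf.union hg).subset (Function.support_add f g), fun w => ?_⟩
    have h1 := hf' w
    have h2 := hg' w
    simp only [adjOp, Pi.add_apply, Finset.sum_add_distrib] at *
    rw [h1, h2, mul_add]
  zero_mem' := by
    refine ⟨by simp, fun w => ?_⟩
    simp [adjOp]
  smul_mem' := by
    rintro c f ⟨hf, hf'⟩
    refine ⟨hf.subset fun w hw => ?_, fun w => ?_⟩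
    · simp only [Function.mem_support, Pi.smul_apply, smul_eq_mul] at hw ⊢
      intro h
      exact hw (by rw [h, mul_zero])
    have h1 := hf' w
    simp only [adjOp, Pi.smul_apply, smul_eq_mul, ← Finset.mul_sum] at *
    rw [h1]; ring

section Aux

variable {V F : Type*} [DecidableEq V] [Field F]

/-- The submodule of finitely supported functions. -/
def Mfin (V F : Type*) [Field F] : Submodule F (V → F) where
  carrier := {f | (support f).Finite}
  add_mem' hf hg := (hf.union hg).subset (support_add _ _)
  zero_mem' := by simp
  smul_mem' := by
    intro c f hf
    refine hf.subset fun w hw => ?_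
    simp only [mem_support, Pi.smul_apply, smul_eq_mul] at hw ⊢
    exact fun h => hw (by rw [h, mul_zero])

lemma mem_Mfin {f : V → F} : f ∈ Mfin V F ↔ (support f).Finite := Iff.rfl

variable (G : SimpleGraph V) [G.LocallyFinite] (l : F)

/-- The linear operator `A - l`. -/
def Tlin : (V → F) →ₗ[F] (V → F) where
  toFun f := fun w => adjOp G f w - l * f w
  map_add' f g := by
    funext w
    simp only [adjOp, Pi.add_apply, Finset.sum_add_distrib]
    ring
  map_smul' c f := by
    funext w
    simp only [adjOp, Pi.smul_apply, smul_eq_mul, RingHom.id_apply, ← Finset.mul_sum]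
    ring

lemma Tlin_apply (f : V → F) (w : V) : Tlin G l f w = adjOp G f w - l * f w := rfl

lemma Tlin_mem (f : V → F) (hf : f ∈ Mfin V F) : Tlin G l f ∈ Mfin V F := by
  have hf' : (support f).Finite := hf
  refine Set.Finite.subset (Set.Finite.union hf'.toFinset.finite_toSet
    (hf'.toFinset.biUnion (fun u => G.neighborFinset u)).finite_toSet) ?_
  intro w hw
  simp only [mem_support, Tlin_apply] at hw
  by_cases h0 : f w = 0
  · have hA : adjOp G f w ≠ 0 := by
      intro h; apply hw; rw [h, h0, mul_zero, sub_zero]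
    obtain ⟨u, hu, hfu⟩ := Finset.exists_ne_zero_of_sum_ne_zero hA
    right
    simp only [Finset.coe_biUnion, Set.mem_iUnion, Finset.mem_coe, Set.Finite.mem_toFinset]
    exact ⟨u, hfu, by rwa [SimpleGraph.mem_neighborFinset, G.adj_comm,
      ← SimpleGraph.mem_neighborFinset]⟩
  · left
    simp only [Finset.mem_coe, Set.Finite.mem_toFinset, mem_support]
    exact h0

/-- Adjointness of the adjacency operator over a suitable finite set. -/
lemma adjoint_sum (f g : V → F) (s : Finset V)
    (hs : ∀ w, g w ≠ 0 → w ∈ s ∧ G.neighborFinset w ⊆ s) :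
    ∑ w ∈ s, adjOp G f w * g w = ∑ w ∈ s, f w * adjOp G g w := by
  classical
  have h1 : ∀ w ∈ s, adjOp G f w * g w
      = ∑ u ∈ s, if G.Adj w u then f u * g w else 0 := by
    intro w _
    by_cases hg : g w = 0
    · simp [hg]
    · have hsub : G.neighborFinset w ⊆ s := (hs w hg).2
      have he : s.filter (fun u => G.Adj w u) = G.neighborFinset w := by
        ext u
        simp only [Finset.mem_filter, SimpleGraph.mem_neighborFinset]
        exact ⟨fun h => h.2, fun h => ⟨hsub (by rwa [SimpleGraph.mem_neighborFinset]), h⟩⟩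
      rw [adjOp, Finset.sum_mul, ← Finset.sum_filter, he]
  have h2 : ∀ w ∈ s, f w * adjOp G g w
      = ∑ u ∈ s, if G.Adj w u then f w * g u else 0 := by
    intro w _
    rw [adjOp, Finset.mul_sum, ← Finset.sum_filter]
    refine (Finset.sum_subset (fun u hu => ?_) (fun u hu hnu => ?_)).symm
    · rw [SimpleGraph.mem_neighborFinset]; exact (Finset.mem_filter.mp hu).2
    · by_cases hgu : g u = 0
      · rw [hgu, mul_zero]
      · exact absurd (Finset.mem_filter.mpr ⟨(hs u hgu).1,
          by rwa [← SimpleGraph.mem_neighborFinset]⟩) hnu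
  rw [Finset.sum_congr rfl h1, Finset.sum_congr rfl h2, Finset.sum_comm]
  refine Finset.sum_congr rfl fun w _ => Finset.sum_congr rfl fun u _ => ?_
  rw [G.adj_comm]



lemma prop_vanish {v : V} {f g : V → F} (hf : IsPropagator G l v f)
    (hg : g ∈ finSuppEigSpace G l) : g v = 0 := by
  classical
  obtain ⟨hgfin, hgeig⟩ := hg
  set s : Finset V := insert v (hgfin.toFinset ∪ hgfin.toFinset.biUnion
    (fun u => G.neighborFinset u)) with hsdef
  have hs : ∀ w, g w ≠ 0 → w ∈ s ∧ G.neighborFinset w ⊆ s := by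
    intro w hw
    have hws : w ∈ hgfin.toFinset := hgfin.mem_toFinset.mpr hw
    constructor
    · exact Finset.mem_insert_of_mem (Finset.mem_union_left _ hws)
    · intro u hu
      exact Finset.mem_insert_of_mem (Finset.mem_union_right _
        (Finset.mem_biUnion.mpr ⟨w, hws, hu⟩))
  have key := adjoint_sum G f g s hs
  have h1 : ∑ w ∈ s, (adjOp G f w - l * f w) * g w = g v := by
    have : ∀ w ∈ s, (adjOp G f w - l * f w) * g w = if w = v then g w else 0 := by
      intro w _
      rw [hf w]
      by_cases h : w = v <;> simp [h]
    rw [Finset.sum_congr rfl this, Finset.sum_ite_eq' s v g]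
    simp [hsdef]
  have h2 : ∑ w ∈ s, (adjOp G f w - l * f w) * g w = 0 := by
    have expand : ∀ w ∈ s, (adjOp G f w - l * f w) * g w
        = adjOp G f w * g w - l * (f w * g w) := by intro w _; ring
    rw [Finset.sum_congr rfl expand, Finset.sum_sub_distrib, key, ← Finset.mul_sum]
    have : ∀ w ∈ s, f w * adjOp G g w = l * (f w * g w) := by
      intro w _; rw [hgeig w]; ring
    rw [Finset.sum_congr rfl this, ← Finset.mul_sum]
    ring
  rw [← h1, h2]

lemma exists_propagator {v : V}
    (h : ∀ g ∈ finSuppEigSpace G l, g v = 0) : ∃ f, IsPropagator G l v f := by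
  classical
  have hmem : ∀ f ∈ Mfin V F, Tlin G l f ∈ Mfin V F := fun f hf => Tlin_mem G l f hf
  set Tm : Mfin V F →ₗ[F] Mfin V F := (Tlin G l).restrict hmem with hTm
  set evv : Mfin V F →ₗ[F] F := (LinearMap.proj v).comp (Mfin V F).subtype with hevv
  have hker : LinearMap.ker Tm ≤ LinearMap.ker evv := by
    intro g hg
    have hg0 : Tlin G l (g : V → F) = 0 := by
      have h1 := LinearMap.mem_ker.mp hg
      rw [hTm, LinearMap.restrict_apply] at h1
      exact congrArg Subtype.val h1
    have hgE : (g : V → F) ∈ finSuppEigSpace G l := by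
      refine ⟨g.2, fun w => ?_⟩
      have h2 := congrFun hg0 w
      simp only [Tlin_apply, Pi.zero_apply, sub_eq_zero] at h2
      exact h2
    simpa [hevv] using h _ hgE
  set φ₀ : LinearMap.range Tm →ₗ[F] F :=
    (Submodule.liftQ (LinearMap.ker Tm) evv hker).comp
      Tm.quotKerEquivRange.symm.toLinearMap with hφ₀
  obtain ⟨φ, hφ⟩ := LinearMap.exists_extend φ₀
  have hφval : ∀ g : Mfin V F, ∀ hh : Tlin G l (g : V → F) ∈ Mfin V F,
      φ ⟨Tlin G l (g : V → F), hh⟩ = (g : V → F) v := by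
    intro g hh
    have hmemr : Tm g ∈ LinearMap.range Tm := LinearMap.mem_range_self Tm g
    have h1 := LinearMap.congr_fun hφ ⟨Tm g, hmemr⟩
    have h2 : ((LinearMap.range Tm).subtype ⟨Tm g, hmemr⟩ : Mfin V F)
        = ⟨Tlin G l (g : V → F), hh⟩ := rfl
    rw [LinearMap.comp_apply, h2] at h1
    rw [h1, hφ₀]
    have h3 : Tm.quotKerEquivRange.symm ⟨Tm g, hmemr⟩ = (LinearMap.ker Tm).mkQ g :=
      LinearMap.quotKerEquivRange_symm_apply_image Tm g hmemr
    simp only [LinearMap.comp_apply, LinearEquiv.coe_toLinearMap, h3,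
      Submodule.mkQ_apply, Submodule.liftQ_apply, hevv]
    rfl
  have hδfin : ∀ u : V, Pi.single u (1 : F) ∈ Mfin V F := by
    intro u
    refine (Set.finite_singleton u).subset fun x hx => ?_
    simp only [mem_support] at hx
    by_contra hne
    exact hx (Pi.single_eq_of_ne (by simpa using hne) 1)
  set δ : V → Mfin V F := fun u => ⟨Pi.single u 1, hδfin u⟩ with hδ
  have key2 : ∀ w : V, (⟨Tlin G l (Pi.single w 1), Tlin_mem G l _ (hδfin w)⟩ : Mfin V F)
      = ∑ u ∈ G.neighborFinset w, δ u - l • δ w := by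
    intro w
    apply Subtype.ext
    have hcoe : ((∑ u ∈ G.neighborFinset w, δ u - l • δ w : Mfin V F) : V → F)
        = (∑ u ∈ G.neighborFinset w, (Pi.single u 1 : V → F)) - l • (Pi.single w 1 : V → F) := by
      simp only [AddSubgroupClass.coe_sub, AddSubmonoidClass.coe_finset_sum,
        SetLike.val_smul, hδ]
    rw [hcoe]
    funext x
    simp only [Tlin_apply, adjOp, Pi.sub_apply, Finset.sum_apply, Pi.smul_apply,
      smul_eq_mul, Pi.single_apply]
    rw [Finset.sum_ite_eq' (G.neighborFinset x) w fun _ => (1 : F),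
      Finset.sum_ite_eq (G.neighborFinset w) x fun _ => (1 : F)]
    have : w ∈ G.neighborFinset x ↔ x ∈ G.neighborFinset w := by
      rw [SimpleGraph.mem_neighborFinset, SimpleGraph.mem_neighborFinset, G.adj_comm]
    rw [if_congr this rfl rfl]
  refine ⟨fun u => φ (δ u), fun w => ?_⟩
  have hval : adjOp G (fun u => φ (δ u)) w - l * φ (δ w)
      = φ ⟨Tlin G l (Pi.single w 1), Tlin_mem G l _ (hδfin w)⟩ := by
    rw [key2 w, map_sub, map_smul, map_sum, adjOp]
    simp only [smul_eq_mul]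
  rw [hval, hφval (δ w) (Tlin_mem G l _ (hδfin w))]
  have : (δ w : V → F) v = if v = w then 1 else 0 := by
    simp [hδ, Pi.single_apply]
  rw [this]
  exact if_congr eq_comm rfl rfl

end Aux

theorem stmt4 {V F : Type*} [DecidableEq V] (G : SimpleGraph V) [G.LocallyFinite] [Field F]
    (l : F) :
    {v : V | ¬ ∃ f : V → F, IsPropagator G l v f}.Finite ↔
      FiniteDimensional F (finSuppEigSpace G l) := by
  classical
  have keyiff : ∀ v : V, (∃ f, IsPropagator G l v f) ↔
      ∀ g ∈ finSuppEigSpace G l, g v = 0 := fun v =>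
    ⟨fun ⟨f, hf⟩ g hg => prop_vanish G l hf hg, fun h => exists_propagator G l h⟩
  constructor
  · intro hS
    haveI := hS.fintype
    set S := {v : V | ¬ ∃ f : V → F, IsPropagator G l v f} with hSdef
    set r : finSuppEigSpace G l →ₗ[F] (S → F) :=
      LinearMap.pi (fun w : S => (LinearMap.proj (w : V)).comp
        (finSuppEigSpace G l).subtype) with hr
    have hinj : Function.Injective r := by
      refine (injective_iff_map_eq_zero r).mpr fun g hg0 => ?_
      apply Subtype.ext
      funext x
      by_contra hx
      have hxS : x ∈ S := by
        simp only [hSdef, Set.mem_setOf_eq]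
        intro hex
        exact hx (((keyiff x).mp hex) _ g.2)
      have := congrFun hg0 ⟨x, hxS⟩
      exact hx this
    exact FiniteDimensional.of_injective r hinj
  · intro hFD
    set b := Module.finBasis F (finSuppEigSpace G l) with hb
    refine Set.Finite.subset (Set.finite_iUnion
      (fun i => ((b i).2.1 : (support ((b i : V → F))).Finite))) ?_
    intro v hv
    simp only [Set.mem_setOf_eq] at hv
    rw [keyiff v] at hv
    push_neg at hv
    obtain ⟨g, hgE, hgv⟩ := hv
    by_contra hnot
    simp only [Set.mem_iUnion, mem_support, not_exists, not_not] at hnot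
    apply hgv
    have hrepr := b.sum_repr ⟨g, hgE⟩
    have hcoe := congrArg (fun x : finSuppEigSpace G l => (x : V → F) v) hrepr
    simp only [AddSubmonoidClass.coe_finset_sum, Finset.sum_apply, SetLike.val_smul,
      Pi.smul_apply, smul_eq_mul] at hcoe
    rw [← hcoe]
    exact Finset.sum_eq_zero fun i _ => by rw [hnot i, mul_zero]
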